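/- Let X be a paracompact topological space with covering dimension dim X = 0, and let Y be a complete metric space. Then every lower semicontinuous map φ : X → Set Y with nonempty closed values admits a continuous single-valued selection. -/

import Mathlib

lemma aux_locally_const {X : Type*} [TopologicalSpace X]
    (hdim : ∀ 𝒰 : Set (Set X), (∀ U ∈ 𝒰, IsOpen U) → ⋃₀ 𝒰 = Set.univ →
      ∃ 𝒱 : Set (Set X), (∀ V ∈ 𝒱, IsOpen V) ∧ (∀ V ∈ 𝒱, ∃ U ∈ 𝒰, V ⊆ U) ∧
        ⋃₀ 𝒱 = Set.univ ∧ 𝒱.Pairwise Disjoint)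
    {Y : Type*} [TopologicalSpace Y] (P : X → Y → Prop)
    (h : ∀ x : X, ∃ y : Y, ∃ U : Set X, IsOpen U ∧ x ∈ U ∧ ∀ x' ∈ U, P x' y) :
    ∃ f : X → Y, Continuous f ∧ ∀ x, P x (f x) := by
  cases isEmpty_or_nonempty X with
  | inl hX =>
    refine ⟨fun x => isEmptyElim x, ?_, fun x => isEmptyElim x⟩
    rw [continuous_iff_continuousAt]; exact fun x => isEmptyElim x
  | inr hX => ?_
  choose y U hUo hxU hUP using h
  obtain ⟨𝒱, hVo, hVsub, hVcov, hVdisj⟩ := hdim (Set.range U)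
    (by rintro _ ⟨x, rfl⟩; exact hUo x)
    (Set.eq_univ_of_forall fun x => ⟨U x, ⟨x, rfl⟩, hxU x⟩)
  have hw : ∀ V : Set X, V ∈ 𝒱 → ∃ z, V ⊆ U z := by
    intro V hV
    obtain ⟨_, ⟨z, rfl⟩, hs⟩ := hVsub V hV
    exact ⟨z, hs⟩
  choose! w hwsub using hw
  have hmem : ∀ x : X, ∃ V, V ∈ 𝒱 ∧ x ∈ V := by
    intro x
    have : x ∈ ⋃₀ 𝒱 := hVcov ▸ Set.mem_univ x
    obtain ⟨V, hV, hx⟩ := this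
    exact ⟨V, hV, hx⟩
  choose Vx hVx hxVx using hmem
  have huniq : ∀ x x' : X, x' ∈ Vx x → Vx x' = Vx x := by
    intro x x' hx'
    by_contra hne
    exact Set.not_disjoint_iff.mpr ⟨x', hxVx x', hx'⟩ (hVdisj (hVx x') (hVx x) hne)
  refine ⟨fun x => y (w (Vx x)), ?_, ?_⟩
  · rw [continuous_iff_continuousAt]
    intro x
    have hev : ∀ᶠ x' in nhds x, y (w (Vx x')) = y (w (Vx x)) := by
      filter_upwards [(hVo _ (hVx x)).mem_nhds (hxVx x)] with x' hx'
      rw [huniq x x' hx']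
    exact continuousAt_const.congr (Filter.EventuallyEq.symm hev)
  · intro x
    exact hUP (w (Vx x)) x (hwsub (Vx x) (hVx x) (hxVx x))

/-- Michael's zero-dimensional selection theorem. -/
theorem zero_dimensional_selection
    {X : Type*} [TopologicalSpace X] [ParacompactSpace X]
    (hdim : ∀ 𝒰 : Set (Set X), (∀ U ∈ 𝒰, IsOpen U) → ⋃₀ 𝒰 = Set.univ →
      ∃ 𝒱 : Set (Set X), (∀ V ∈ 𝒱, IsOpen V) ∧ (∀ V ∈ 𝒱, ∃ U ∈ 𝒰, V ⊆ U) ∧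
        ⋃₀ 𝒱 = Set.univ ∧ 𝒱.Pairwise Disjoint)
    {Y : Type*} [MetricSpace Y] [CompleteSpace Y]
    (φ : X → Set Y)
    (hlsc : ∀ U : Set Y, IsOpen U → IsOpen {x | (φ x ∩ U).Nonempty})
    (hne : ∀ x, (φ x).Nonempty)
    (hcl : ∀ x, IsClosed (φ x)) :
    ∃ f : X → Y, Continuous f ∧ ∀ x, f x ∈ φ x := by
  -- the invariant for the approximating sequence
  set Q : ℕ → (X → Y) → Prop :=
    fun n g => Continuous g ∧ ∀ x, ∃ y ∈ φ x, dist (g x) y < (1/2 : ℝ)^n with hQ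
  have hpow : ∀ n : ℕ, (0:ℝ) < (1/2 : ℝ)^n := fun n => pow_pos (by norm_num) n
  -- base step
  have base : ∃ g : X → Y, Q 0 g := by
    obtain ⟨f, hf, hfP⟩ := aux_locally_const hdim
      (P := fun x' z => (φ x' ∩ Metric.ball z 1).Nonempty)
      (by
        intro x
        obtain ⟨y, hy⟩ := hne x
        refine ⟨y, {x' | (φ x' ∩ Metric.ball y 1).Nonempty}, hlsc _ Metric.isOpen_ball,
          ⟨y, hy, by simp⟩, fun x' hx' => hx'⟩)
    refine ⟨f, hf, fun x => ?_⟩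
    obtain ⟨z, hz, hzb⟩ := hfP x
    exact ⟨z, hz, by simpa [dist_comm] using Metric.mem_ball.mp hzb⟩
  -- inductive step
  have step : ∀ (n : ℕ) (g : X → Y), Q n g →
      ∃ h : X → Y, Q (n+1) h ∧ ∀ x, dist (h x) (g x) < (1/2 : ℝ)^n := by
    intro n g hg
    obtain ⟨hgc, hgφ⟩ := hg
    obtain ⟨f, hf, hfP⟩ := aux_locally_const hdim
      (P := fun x' z => (φ x' ∩ Metric.ball z ((1/2 : ℝ)^(n+1))).Nonempty ∧
        dist (g x') z < (1/2 : ℝ)^n)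
      (by
        intro x
        obtain ⟨y, hy, hdy⟩ := hgφ x
        refine ⟨y, {x' | (φ x' ∩ Metric.ball y ((1/2 : ℝ)^(n+1))).Nonempty} ∩
          {x' | dist (g x') y < (1/2 : ℝ)^n}, ?_, ⟨⟨y, hy, by simp [hpow (n+1)]⟩, hdy⟩,
          fun x' hx' => hx'⟩
        exact (hlsc _ Metric.isOpen_ball).inter
          (isOpen_lt (Continuous.dist hgc continuous_const) continuous_const))
    refine ⟨f, ⟨hf, fun x => ?_⟩, fun x => ?_⟩
    · obtain ⟨⟨z, hz, hzb⟩, _⟩ := hfP x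
      exact ⟨z, hz, by simpa [dist_comm] using Metric.mem_ball.mp hzb⟩
    · have := (hfP x).2
      rwa [dist_comm]
  -- build the sequence
  let T : ∀ n : ℕ, {g : X → Y // Q n g} := fun n =>
    Nat.rec ⟨base.choose, base.choose_spec⟩
      (fun k p => ⟨(step k p.1 p.2).choose, (step k p.1 p.2).choose_spec.1⟩) n
  let F : ℕ → X → Y := fun n => (T n).1
  have hTd : ∀ (n : ℕ) (x : X), dist (F (n+1) x) (F n x) < (1/2 : ℝ)^n :=
    fun n x => (step n (T n).1 (T n).2).choose_spec.2 x
  have hcauchy : ∀ x : X, CauchySeq (fun n => F n x) := by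
    intro x
    apply cauchySeq_of_le_geometric (1/2 : ℝ) 1 (by norm_num)
    intro n
    rw [dist_comm]
    simpa using (hTd n x).le
  have hlim : ∀ x : X, ∃ y : Y, Filter.Tendsto (fun n => F n x) Filter.atTop (nhds y) :=
    fun x => cauchySeq_tendsto_of_complete (hcauchy x)
  choose f hf using hlim
  have hdistf : ∀ (n : ℕ) (x : X), dist (F n x) (f x) ≤ 2 * (1/2 : ℝ)^n := by
    intro n x
    have := dist_le_of_le_geometric_of_tendsto (1/2 : ℝ) 1 (by norm_num)
      (fun k => by rw [dist_comm]; simpa using (hTd k x).le) (hf x) n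
    calc dist (F n x) (f x) ≤ 1 * (1/2:ℝ)^n / (1 - 1/2) := this
      _ = 2 * (1/2 : ℝ)^n := by ring
  have htu : TendstoUniformly F f Filter.atTop := by
    rw [Metric.tendstoUniformly_iff]
    intro ε hε
    have h0 : Filter.Tendsto (fun n : ℕ => 2 * (1/2 : ℝ)^n) Filter.atTop (nhds 0) := by
      simpa using (tendsto_pow_atTop_nhds_zero_of_lt_one (by norm_num : (0:ℝ) ≤ 1/2)
        (by norm_num : (1/2:ℝ) < 1)).const_mul 2
    filter_upwards [h0.eventually (gt_mem_nhds hε)] with n hn x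
    calc dist (f x) (F n x) = dist (F n x) (f x) := dist_comm _ _
      _ ≤ 2 * (1/2 : ℝ)^n := hdistf n x
      _ < ε := hn
  refine ⟨f, htu.continuous (Filter.Eventually.of_forall fun n => (T n).2.1).frequently, fun x => ?_⟩
  have : f x ∈ closure (φ x) := by
    rw [Metric.mem_closure_iff]
    intro ε hε
    obtain ⟨n, hn⟩ := exists_pow_lt_of_lt_one (by positivity : (0:ℝ) < ε / 3)
      (by norm_num : (1/2:ℝ) < 1)
    obtain ⟨y, hy, hdy⟩ := (T n).2.2 x
    refine ⟨y, hy, ?_⟩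
    calc dist (f x) y ≤ dist (f x) (F n x) + dist (F n x) y := dist_triangle _ _ _
      _ ≤ 2 * (1/2:ℝ)^n + (1/2:ℝ)^n := by
          rw [dist_comm (f x)]
          exact add_le_add (hdistf n x) hdy.le
      _ = 3 * (1/2:ℝ)^n := by ring
      _ < 3 * (ε/3) := by linarith
      _ = ε := by ring
  rwa [(hcl x).closure_eq] at this
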